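/- arXiv:cs/0612011 — 2 statements merged into one kernel-verified Lean document; each statement's English description precedes it below -/
import Mathlib

section
/- Let G be a finite bipartite (Tanner) graph with variable-node set V and check-node set C, where variable node j has degree d_j and runs the majority-based algorithm MB^{ω_j} with order 0 ≤ ω_j ≤ d_j − 1 − ⌈d_j/2⌉. Let S ⊆ V be a set of variable nodes and let C_o(S) denote the set of check nodes having odd degree in the subgraph induced by S (i.e., check nodes with an odd number of neighbors in S). If every variable node j of the graph has at most ⌈d_j/2⌉ + ω_j − 1 neighbors in C_o(S), then S is a trapping set: when the all-one codeword is transmitted and the channel output is in error exactly on S (so the channel message of node j is m₀(j) = −1 if j ∈ S and +1 otherwise), the decoder fails to correct the errors and, at every iteration, the set of variable nodes decoded erroneously is exactly S. -/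
/-!
Statement 0: For a Tanner graph where variable node `j` runs the majority-based
algorithm MB^{ω j} (with 0 ≤ ω j ≤ d_j − 1 − ⌈d_j/2⌉), if every variable node `j`
has at most ⌈d_j/2⌉ + ω j − 1 neighbors among the check nodes of odd degree in the
subgraph induced by `S`, then `S` is a trapping set: with the initial errors exactly
on `S`, at every iteration the set of variable nodes decoded erroneously is exactly `S`.
-/

open Finset

/-- `⌈d/2⌉` for a natural number `d`. -/
def ceilHalf (d : ℕ) : ℕ := (d + 1) / 2

/-- The check-node neighbors of variable node `j`. -/
def varNbrs {V C : Type*} [Fintype C] (adj : V → C → Prop)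
    [∀ j c, Decidable (adj j c)] (j : V) : Finset C :=
  Finset.univ.filter (fun c => adj j c)

/-- The variable-node neighbors of check node `c`. -/
def chkNbrs {V C : Type*} [Fintype V] (adj : V → C → Prop)
    [∀ j c, Decidable (adj j c)] (c : C) : Finset V :=
  Finset.univ.filter (fun v => adj v c)

/-- The degree `d_j` of variable node `j`. -/
def varDeg {V C : Type*} [Fintype C] (adj : V → C → Prop)
    [∀ j c, Decidable (adj j c)] (j : V) : ℕ :=
  (varNbrs adj j).card

/-- The set `C_o(S)` of check nodes having an odd number of neighbors in `S`. -/
def Codd {V C : Type*} [Fintype V] [Fintype C] [DecidableEq V] (adj : V → C → Prop)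
    [∀ j c, Decidable (adj j c)] (S : Finset V) : Finset C :=
  Finset.univ.filter (fun c => Odd ((chkNbrs adj c ∩ S).card))

/-- Check-node update: the message sent by check node `c` to variable node `j` is
the product of the (extrinsic) incoming variable-to-check messages `μ v c` over the
other neighbors `v` of `c`. -/
def checkMsg {V C : Type*} [Fintype V] [DecidableEq V] (adj : V → C → Prop)
    [∀ j c, Decidable (adj j c)] (μ : V → C → ℤ) (c : C) (j : V) : ℤ :=
  ∏ v ∈ (chkNbrs adj c).erase j, μ v c

/-- Variable-node update of MB^{ω j}: variable node `j` sends `-m₀ j` to check node `c`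
if at least `⌈d_j/2⌉ + ω j` of the extrinsic incoming check-to-variable messages equal
`-m₀ j`, and `m₀ j` otherwise. -/
def varMsg {V C : Type*} [Fintype C] [DecidableEq C] (adj : V → C → Prop)
    [∀ j c, Decidable (adj j c)] (m₀ : V → ℤ) (ω : V → ℕ)
    (inc : C → V → ℤ) (j : V) (c : C) : ℤ :=
  if ceilHalf (varDeg adj j) + ω j ≤
      (((varNbrs adj j).erase c).filter (fun c' => inc c' j = -m₀ j)).card
  then -m₀ j else m₀ j

/-- One full iteration of message passing (check-node update followed by the
MB variable-node update), mapping variable-to-check messages to new ones. -/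
def iterMap {V C : Type*} [Fintype V] [Fintype C] [DecidableEq V] [DecidableEq C]
    (adj : V → C → Prop) [∀ j c, Decidable (adj j c)] (m₀ : V → ℤ) (ω : V → ℕ)
    (μ : V → C → ℤ) : V → C → ℤ :=
  fun j c => varMsg adj m₀ ω (checkMsg adj μ) j c

/-- Decoded value of variable node `j`: `-m₀ j` if at least `⌈d_j/2⌉ + ω j` of all
incoming check-to-variable messages equal `-m₀ j`, and `m₀ j` otherwise. -/
def decoded {V C : Type*} [Fintype V] [Fintype C] [DecidableEq V] [DecidableEq C]
    (adj : V → C → Prop) [∀ j c, Decidable (adj j c)] (m₀ : V → ℤ) (ω : V → ℕ)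
    (μ : V → C → ℤ) (j : V) : ℤ :=
  if ceilHalf (varDeg adj j) + ω j ≤
      ((varNbrs adj j).filter (fun c => checkMsg adj μ c j = -m₀ j)).card
  then -m₀ j else m₀ j

theorem trapping_set_theorem
    {V C : Type*} [Fintype V] [Fintype C] [DecidableEq V] [DecidableEq C]
    (adj : V → C → Prop) [∀ j c, Decidable (adj j c)]
    (ω : V → ℕ) (S : Finset V) (m₀ : V → ℤ)
    -- each variable node runs MB^{ω j} with 0 ≤ ω j ≤ d_j − 1 − ⌈d_j/2⌉
    (hω : ∀ j : V, (ω j : ℤ) ≤ (varDeg adj j : ℤ) - 1 - (ceilHalf (varDeg adj j) : ℤ))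
    -- the all-one codeword is transmitted and the errors are exactly on S
    (hm₀ : ∀ j : V, m₀ j = if j ∈ S then -1 else 1)
    -- every variable node j has at most ⌈d_j/2⌉ + ω j − 1 neighbors in C_o(S)
    (hS : ∀ j : V, ((varNbrs adj j ∩ Codd adj S).card : ℤ) ≤
        (ceilHalf (varDeg adj j) : ℤ) + (ω j : ℤ) - 1) :
    -- at every iteration, the set of variable nodes decoded erroneously is exactly S,
    -- i.e. the decoder fails to correct the errors
    ∀ l : ℕ,
      Finset.univ.filter
        (fun j => decoded adj m₀ ω ((iterMap adj m₀ ω)^[l] (fun v _ => m₀ v)) j = -1)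
      = S := by
  
  have hm1 : ∀ j, m₀ j = 1 ∨ m₀ j = -1 := by
    intro j; rw [hm₀ j]; split <;> simp
  have hchk : ∀ j c, adj j c →
      (checkMsg adj (fun v _ => m₀ v) c j = -m₀ j ↔ c ∈ Codd adj S) := by
    intro j c hadj
    have hjmem : j ∈ chkNbrs adj c := by simp [chkNbrs, hadj]
    have hP : ∏ v ∈ chkNbrs adj c, m₀ v
        = m₀ j * checkMsg adj (fun v _ => m₀ v) c j := by
      rw [checkMsg, ← Finset.mul_prod_erase _ _ hjmem]
    have hPval : ∏ v ∈ chkNbrs adj c, m₀ v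
        = (-1 : ℤ) ^ ((chkNbrs adj c ∩ S).card) := by
      calc ∏ v ∈ chkNbrs adj c, m₀ v
          = ∏ v ∈ chkNbrs adj c, (if v ∈ S then (-1:ℤ) else 1) :=
            Finset.prod_congr rfl fun v _ => hm₀ v
        _ = (-1:ℤ) ^ ((chkNbrs adj c).filter (· ∈ S)).card := by
            rw [Finset.prod_ite, Finset.prod_const, Finset.prod_const, one_pow, mul_one]
        _ = _ := by rw [Finset.filter_mem_eq_inter]
    have hkey : checkMsg adj (fun v _ => m₀ v) c j = -m₀ j ↔
        (-1:ℤ) ^ ((chkNbrs adj c ∩ S).card) = -1 := by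
      rw [← hPval, hP]
      rcases hm1 j with h1 | h1 <;> rw [h1] <;> constructor <;> intro h <;> linarith
    rw [hkey]
    simp only [Codd, Finset.mem_filter, Finset.mem_univ, true_and]
    rcases Nat.even_or_odd ((chkNbrs adj c ∩ S).card) with he | ho
    · rw [he.neg_one_pow]
      constructor
      · intro h; norm_num at h
      · intro h; exact absurd h (Nat.not_odd_iff_even.mpr he)
    · rw [ho.neg_one_pow]; simp [ho]
  have hfilter : ∀ j, (varNbrs adj j).filter
      (fun c => checkMsg adj (fun v _ => m₀ v) c j = -m₀ j) = varNbrs adj j ∩ Codd adj S := by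
    intro j
    rw [← Finset.filter_mem_eq_inter]
    apply Finset.filter_congr
    intro c hc
    have hadj : adj j c := by simpa [varNbrs] using hc
    simp [hchk j c hadj]
  have hcard : ∀ j, (varNbrs adj j ∩ Codd adj S).card < ceilHalf (varDeg adj j) + ω j := by
    intro j; have h := hS j; omega
  have hdec : ∀ j, decoded adj m₀ ω (fun v _ => m₀ v) j = m₀ j := by
    intro j
    rw [decoded, hfilter j, if_neg (not_le.mpr (hcard j))]
  have hfix : iterMap adj m₀ ω (fun v _ => m₀ v) = fun v _ => m₀ v := by
    funext j c
    show varMsg adj m₀ ω (checkMsg adj (fun v _ => m₀ v)) j c = m₀ j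
    rw [varMsg, if_neg]
    intro hle
    have hsub : (((varNbrs adj j).erase c).filter
        (fun c' => checkMsg adj (fun v _ => m₀ v) c' j = -m₀ j)).card
        ≤ (varNbrs adj j ∩ Codd adj S).card := by
      rw [← hfilter j]
      exact Finset.card_le_card (Finset.filter_subset_filter _ (Finset.erase_subset _ _))
    have := hcard j
    omega
  intro l
  rw [Function.iterate_fixed hfix l]
  ext j
  simp only [Finset.mem_filter, Finset.mem_univ, true_and, hdec j, hm₀ j]
  split
  · simp_all
  · simp_all
end

section
/- Let G be a finite bipartite (Tanner) graph with variable-node set V and check-node set C, where variable node j has degree d_j and runs MB^{ω_j} with 0 ≤ ω_j ≤ d_j − 1 − ⌈d_j/2⌉. Let S ⊆ V, set m₀(j) = −1 for j ∈ S and +1 otherwise, and let C_o(S) be the set of check nodes with an odd number of neighbors in S. Assume every variable node j has at most ⌈d_j/2⌉ + ω_j − 1 neighbors in C_o(S). If at some iteration every variable node j sends m₀(j) along all of its edges, then after the check-node update and the MB^{ω_j} variable-node update, every variable node j again sends m₀(j) along all of its edges. In particular, the configuration in which every variable node sends its channel message is a fixed point of the message-passing map, and all messages exchanged between variable nodes and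 check nodes remain unchanged throughout all subsequent iterations. -/
/-!
Statement 2: Under the hypothesis that every variable node `j` has at most
`⌈d_j/2⌉ + ω j − 1` neighbors in `C_o(S)`, if at some iteration every variable node
sends its channel message `m₀ j` along all of its edges, then after the check-node
update and the MB^{ω j} variable-node update every variable node again sends `m₀ j`
along all of its edges.  In particular this configuration is a fixed point of the
message-passing map and all messages remain unchanged throughout all iterations.
-/

open Finset

lemma varMsg_step
    {V C : Type*} [Fintype V] [Fintype C] [DecidableEq V] [DecidableEq C]
    (adj : V → C → Prop) [∀ j c, Decidable (adj j c)]
    (ω : V → ℕ) (S : Finset V) (m₀ : V → ℤ)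
    (hm₀ : ∀ j : V, m₀ j = if j ∈ S then -1 else 1)
    (hS : ∀ j : V, ((varNbrs adj j ∩ Codd adj S).card : ℤ) ≤
        (ceilHalf (varDeg adj j) : ℤ) + (ω j : ℤ) - 1)
    (μ : V → C → ℤ) (hμ : ∀ (j : V) (c : C), adj j c → μ j c = m₀ j)
    (j : V) (c : C) : iterMap adj m₀ ω μ j c = m₀ j := by
  have hsub : (((varNbrs adj j).erase c).filter
      (fun c' => checkMsg adj μ c' j = -m₀ j)) ⊆ varNbrs adj j ∩ Codd adj S := by
    intro c' hc'
    simp only [Finset.mem_filter, Finset.mem_erase] at hc'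
    obtain ⟨⟨hne, hmem⟩, hval⟩ := hc'
    have hadj : adj j c' := by simpa [varNbrs] using hmem
    -- compute checkMsg
    have hprod : checkMsg adj μ c' j =
        (-1 : ℤ) ^ ((((chkNbrs adj c').erase j).filter (fun v => v ∈ S)).card) := by
      unfold checkMsg
      have : ∀ v ∈ (chkNbrs adj c').erase j, μ v c' = if v ∈ S then (-1:ℤ) else 1 := by
        intro v hv
        have hv' : v ∈ chkNbrs adj c' := Finset.mem_of_mem_erase hv
        have : adj v c' := by simpa [chkNbrs] using hv'
        rw [hμ v c' this, hm₀ v]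
      rw [Finset.prod_congr rfl this, Finset.prod_ite, Finset.prod_const,
        Finset.prod_const, one_pow, mul_one]
    set a := (((chkNbrs adj c').erase j).filter (fun v => v ∈ S)).card with ha
    have hset : ((chkNbrs adj c').erase j).filter (fun v => v ∈ S)
        = (chkNbrs adj c' ∩ S).erase j := by
      ext v
      simp only [Finset.mem_filter, Finset.mem_erase, Finset.mem_inter]
      tauto
    have hjmem : j ∈ chkNbrs adj c' := by simpa [chkNbrs] using hadj
    have hodd : Odd ((chkNbrs adj c' ∩ S).card) := by
      by_cases hjS : j ∈ S
      · have hm : m₀ j = -1 := by rw [hm₀ j, if_pos hjS]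
        have h1 : (-1 : ℤ) ^ a = 1 := by rw [← hprod, hval, hm]; ring
        have heven : Even a := by
          rcases Nat.even_or_odd a with h | h
          · exact h
          · exfalso; rw [Odd.neg_one_pow h] at h1; norm_num at h1
        have hjmem' : j ∈ chkNbrs adj c' ∩ S := Finset.mem_inter.mpr ⟨hjmem, hjS⟩
        have hpos : 0 < (chkNbrs adj c' ∩ S).card := Finset.card_pos.mpr ⟨j, hjmem'⟩
        have : (chkNbrs adj c' ∩ S).card = a + 1 := by
          rw [ha, hset, Finset.card_erase_of_mem hjmem']; omega
        rw [this]
        exact heven.add_one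
      · have hm : m₀ j = 1 := by rw [hm₀ j, if_neg hjS]
        have h1 : (-1 : ℤ) ^ a = -1 := by rw [← hprod, hval, hm]
        have hodd' : Odd a := by
          rcases Nat.even_or_odd a with h | h
          · exfalso; rw [Even.neg_one_pow h] at h1; norm_num at h1
          · exact h
        have : (chkNbrs adj c' ∩ S).card = a := by
          rw [ha, hset, Finset.erase_eq_of_notMem]
          simp [Finset.mem_inter, hjS]
        rw [this]; exact hodd'
    exact Finset.mem_inter.mpr ⟨hmem, by simpa [Codd] using hodd⟩
  have hcard := Finset.card_le_card hsub
  have hlt : (((varNbrs adj j).erase c).filter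
      (fun c' => checkMsg adj μ c' j = -m₀ j)).card < ceilHalf (varDeg adj j) + ω j := by
    have := hS j
    have h2 : ((((varNbrs adj j).erase c).filter
        (fun c' => checkMsg adj μ c' j = -m₀ j)).card : ℤ)
        ≤ (ceilHalf (varDeg adj j) : ℤ) + (ω j : ℤ) - 1 := le_trans (by exact_mod_cast hcard) this
    omega
  unfold iterMap varMsg
  rw [if_neg (by omega)]

theorem channel_messages_fixed_point
    {V C : Type*} [Fintype V] [Fintype C] [DecidableEq V] [DecidableEq C]
    (adj : V → C → Prop) [∀ j c, Decidable (adj j c)]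
    (ω : V → ℕ) (S : Finset V) (m₀ : V → ℤ)
    -- each variable node runs MB^{ω j} with 0 ≤ ω j ≤ d_j − 1 − ⌈d_j/2⌉
    (hω : ∀ j : V, (ω j : ℤ) ≤ (varDeg adj j : ℤ) - 1 - (ceilHalf (varDeg adj j) : ℤ))
    -- channel messages: m₀ j = −1 on S and +1 elsewhere
    (hm₀ : ∀ j : V, m₀ j = if j ∈ S then -1 else 1)
    -- every variable node j has at most ⌈d_j/2⌉ + ω j − 1 neighbors in C_o(S)
    (hS : ∀ j : V, ((varNbrs adj j ∩ Codd adj S).card : ℤ) ≤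
        (ceilHalf (varDeg adj j) : ℤ) + (ω j : ℤ) - 1)
    -- at some iteration every variable node sends m₀(j) along all of its edges
    (μ : V → C → ℤ) (hμ : ∀ (j : V) (c : C), adj j c → μ j c = m₀ j) :
    -- after one more iteration every variable node again sends m₀(j) on all its edges,
    (∀ (j : V) (c : C), adj j c → iterMap adj m₀ ω μ j c = m₀ j) ∧
    -- and in particular all messages remain unchanged throughout all iterations
    (∀ (l : ℕ) (j : V) (c : C), adj j c →
        (iterMap adj m₀ ω)^[l] (fun v _ => m₀ v) j c = m₀ j) := by
  constructor
  · intro j c _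
    exact varMsg_step adj ω S m₀ hm₀ hS μ hμ j c
  · intro l
    induction l with
    | zero => intro j c _; simp
    | succ n ih =>
        intro j c hadj
        rw [Function.iterate_succ_apply']
        exact varMsg_step adj ω S m₀ hm₀ hS _ ih j c
end
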